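/- Let a be an odd natural number. Then Σ_{j=0}^{a} binomial(a,j) · (−1)^{j+1} · Σ_{k=1}^{j} ((j−k)(j+k))^{(a−1)/2} = a! · √π · ((a−1)/2)! / (2 · Γ(a/2 + 1)). -/

import Mathlib

open Finset Nat
open scoped fwdDiff

lemma fwd_mul_const (n : ℕ) (c : ℝ) (g : ℕ → ℝ) :
    (fwdDiff (1:ℕ))^[n] (fun x => c * g x) = fun x => c * (fwdDiff (1:ℕ))^[n] g x := by
  have h2 : (fun x => c * g x) = c • g := by funext x; simp
  rw [h2, fwdDiff_iter_const_smul]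
  funext x; simp

lemma fwd_pow_step (d : ℕ) :
    fwdDiff (1:ℕ) (fun x : ℕ => (x : ℝ) ^ d)
      = fun x : ℕ => ∑ t ∈ range d, (d.choose t : ℝ) * (x : ℝ) ^ t := by
  funext x
  have : ((x + 1 : ℕ) : ℝ) ^ d = ∑ t ∈ range (d + 1), (x : ℝ) ^ t * 1 ^ (d - t) * d.choose t := by
    push_cast
    exact add_pow (x : ℝ) 1 d
  simp only [fwdDiff, this, sum_range_succ]
  simp [mul_comm]

lemma fwd_pow_lt : ∀ n d : ℕ, d < n → (fwdDiff (1:ℕ))^[n] (fun x : ℕ => (x : ℝ) ^ d) = fun _ => 0 := by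
  intro n
  induction n with
  | zero => omega
  | succ n IH =>
    intro d hd
    rw [Function.iterate_succ_apply, fwd_pow_step]
    have : (fun x : ℕ => ∑ t ∈ range d, (d.choose t : ℝ) * (x : ℝ) ^ t)
        = ∑ t ∈ range d, fun x : ℕ => (d.choose t : ℝ) * (x : ℝ) ^ t := by
      funext x; simp
    rw [this, fwdDiff_iter_finset_sum]
    funext x
    rw [Finset.sum_apply]
    apply Finset.sum_eq_zero
    intro t ht
    rw [fwd_mul_const, IH t (by simp at ht; omega)]
    simp

lemma fwd_pow_self (n : ℕ) : (fwdDiff (1:ℕ))^[n] (fun x : ℕ => (x : ℝ) ^ n) 0 = n ! := by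
  induction n with
  | zero => simp
  | succ n IH =>
    rw [Function.iterate_succ_apply, fwd_pow_step]
    have : (fun x : ℕ => ∑ t ∈ range (n+1), ((n+1).choose t : ℝ) * (x : ℝ) ^ t)
        = ∑ t ∈ range (n+1), fun x : ℕ => ((n+1).choose t : ℝ) * (x : ℝ) ^ t := by
      funext x; simp
    rw [this, fwdDiff_iter_finset_sum]
    rw [Finset.sum_apply, sum_range_succ]
    have h1 : ∀ t ∈ range n, (fwdDiff (1:ℕ))^[n] (fun x : ℕ => ((n+1).choose t : ℝ) * (x:ℝ) ^ t) 0 = 0 := by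
      intro t ht
      rw [fwd_mul_const, fwd_pow_lt n t (by simpa using ht)]
      simp
    rw [Finset.sum_eq_zero h1, fwd_mul_const]
    show (0:ℝ) + ((n+1).choose n : ℝ) * (fwdDiff (1:ℕ))^[n] (fun x : ℕ => (x:ℝ)^n) 0 = _
    rw [IH]
    simp [Nat.choose_succ_self_right, factorial_succ]

lemma pf (m : ℕ) : ∀ x : ℝ, 0 < x →
    ∑ i ∈ range (m+1), (-1:ℝ)^i * (m.choose i) / (x + i)
      = m ! / ∏ i ∈ range (m+1), (x + i) := by
  induction m with
  | zero => intro x hx; simp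
  | succ m IH =>
    intro x hx
    have hx' : x ≠ 0 := ne_of_gt hx
    have hx1 : (0:ℝ) < x + 1 := by linarith
    have hP : (0:ℝ) < ∏ i ∈ range (m+1), (x + i) :=
      prod_pos (fun i _ => by positivity)
    have hQ : (0:ℝ) < ∏ i ∈ range (m+1), (x + 1 + i) :=
      prod_pos (fun i _ => by positivity)
    set P := ∏ i ∈ range (m+1), (x + (i:ℝ)) with hPdef
    set Q := ∏ i ∈ range (m+1), (x + 1 + (i:ℝ)) with hQdef
    have hxQ : ∏ i ∈ range (m+1+1), (x + (i:ℝ)) = x * Q := by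
      rw [prod_range_succ' (fun i => x + (i:ℝ)) (m+1)]
      rw [mul_comm]
      congr 1
      · push_cast; ring
      · rw [hQdef]; apply prod_congr rfl; intro i _; push_cast; ring
    have key : x * Q = P * (x + m + 1) := by
      rw [← hxQ, prod_range_succ]
      push_cast; ring
    have hT : ∑ i ∈ range (m+1), (-1:ℝ)^i * (m.choose (i+1)) / (x + i + 1)
        = -(↑m ! / P) + 1 / x := by
      have h0 := IH x hx
      rw [sum_range_succ' (fun i => (-1:ℝ)^i * (m.choose i) / (x + i)) m] at h0
      have h1 : ∑ i ∈ range m, (-1:ℝ)^(i+1) * (m.choose (i+1)) / (x + ↑(i+1))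
          = ∑ i ∈ range m, -((-1:ℝ)^i * (m.choose (i+1)) / (x + i + 1)) := by
        apply sum_congr rfl; intro i _; push_cast; ring
      rw [h1, sum_neg_distrib] at h0
      rw [sum_range_succ]
      have h2 : ((-1:ℝ)^m * (m.choose (m+1)) / (x + m + 1)) = 0 := by
        simp [Nat.choose_succ_self]
      rw [h2, add_zero]
      have h3 : (-1:ℝ)^0 * (m.choose 0) / (x + ↑(0:ℕ)) = 1 / x := by simp
      rw [h3] at h0
      linarith
    have hIH1 := IH (x+1) hx1
    rw [← hQdef] at hIH1
    have h4 : ∀ i ∈ range (m+1), (-1:ℝ)^(i+1) * ((m+1).choose (i+1)) / (x + ↑(i+1))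
        = -((-1:ℝ)^i * (m.choose i) / (x + 1 + i))
          + -((-1:ℝ)^i * (m.choose (i+1)) / (x + i + 1)) := by
      intro i _
      rw [Nat.choose_succ_succ]
      push_cast
      ring
    have hS : ∑ i ∈ range (m+1+1), (-1:ℝ)^i * ((m+1).choose i) / (x + i)
        = ↑m ! / P - ↑m ! / Q := by
      rw [sum_range_succ' (fun i => (-1:ℝ)^i * ((m+1).choose i) / (x + i)) (m+1)]
      rw [sum_congr rfl h4, sum_add_distrib, sum_neg_distrib, sum_neg_distrib, hIH1, hT]
      have h5 : (-1:ℝ)^0 * ((m+1).choose 0) / (x + ↑(0:ℕ)) = 1 / x := by simp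
      rw [h5]
      ring
    have hfact : ((m+1)! : ℝ) = (m+1) * ↑m ! := by
      push_cast [factorial_succ]; ring
    have hfin : ↑m ! / P - ↑m ! / Q = ((m+1)! : ℝ) / (x * Q) := by
      rw [div_sub_div _ _ hP.ne' hQ.ne', div_eq_div_iff (by positivity) (by positivity), hfact]
      linear_combination (↑m ! * Q) * key
    have hcast : ∑ i ∈ range (m+1+1), (-1:ℝ)^i * ((m+1).choose i) / (x + i)
        = ↑(m+1)! / ∏ i ∈ range (m+1+1), (x + (i:ℝ)) := by
      rw [hS, hxQ, hfin]
    exact hcast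

lemma gprod (m : ℕ) : Real.Gamma ((m:ℝ) + 3/2)
    = (∏ i ∈ range (m+1), ((1:ℝ)/2 + i)) * Real.sqrt Real.pi := by
  induction m with
  | zero =>
    have h : ((0:ℕ):ℝ) + 3/2 = 1/2 + 1 := by norm_num
    rw [h, Real.Gamma_add_one (by norm_num), Real.Gamma_one_half_eq]
    norm_num
  | succ m IH =>
    have h : ((m+1:ℕ):ℝ) + 3/2 = ((m:ℝ) + 3/2) + 1 := by push_cast; ring
    rw [h, Real.Gamma_add_one (by positivity), IH, prod_range_succ (fun i => (1:ℝ)/2 + i) (m+1)]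
    push_cast
    ring

lemma faul (j p : ℕ) : ∑ k ∈ Icc 1 j, (k:ℝ)^p
    = ∑ t ∈ range (p+1), ((bernoulli' t : ℚ):ℝ) * (((p+1).choose t : ℕ):ℝ)
        * (j:ℝ)^(p+1-t) / ((p+1:ℕ):ℝ) := by
  have h := _root_.sum_Ico_pow j p
  rw [Finset.Ico_add_one_right_eq_Icc] at h
  have h2 := congrArg (fun q : ℚ => (q : ℝ)) h
  push_cast at h2 ⊢
  convert h2 using 2

noncomputable def Cc (m i t : ℕ) : ℝ :=
  (m.choose i : ℝ) * (-1:ℝ)^(m-i) * ((bernoulli' t : ℚ):ℝ)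
    * (((2*(m-i)+1).choose t : ℕ):ℝ) / ((2*(m-i)+1 : ℕ):ℝ)

lemma fwd_mul_const' (n : ℕ) (c : ℝ) (g : ℕ → ℝ) (x : ℕ) :
    (fwdDiff (1:ℕ))^[n] (fun y => c * g y) x = c * (fwdDiff (1:ℕ))^[n] g x := by
  rw [fwd_mul_const]

theorem stmt_10 (a : ℕ) (ha : Odd a) :
    ∑ j ∈ Finset.range (a + 1), (a.choose j : ℝ) * (-1) ^ (j + 1)
        * ∑ k ∈ Finset.Icc 1 j, (((j : ℝ) - k) * ((j : ℝ) + k)) ^ ((a - 1) / 2)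
      = (a.factorial : ℝ) * Real.sqrt Real.pi * (((a - 1) / 2 : ℕ).factorial : ℝ)
          / (2 * Real.Gamma ((a : ℝ) / 2 + 1)) := by
  obtain ⟨m, hm⟩ := ha
  have ha2 : a = 2*m+1 := by omega
  subst ha2
  have hm2 : (2*m+1-1)/2 = m := by omega
  rw [hm2]
  set f : ℕ → ℝ := fun j => ∑ k ∈ Icc 1 j, (((j:ℝ) - k) * ((j:ℝ) + k)) ^ m with hfdef
  -- Step A : LHS is an iterated forward difference
  have hA : ∑ j ∈ range (2*m+1+1), ((2*m+1).choose j : ℝ) * (-1)^(j+1) * f j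
      = (fwdDiff (1:ℕ))^[2*m+1] f 0 := by
    rw [fwdDiff_iter_eq_sum_shift]
    apply sum_congr rfl
    intro j hj
    have hj' : j ≤ 2*m+1 := by simp at hj; omega
    have harg : (0 + j • (1:ℕ)) = j := by simp
    rw [harg, zsmul_eq_mul]
    push_cast
    have hpar : ((-1:ℝ))^(2*m+1-j) = (-1)^(j+1) := by
      rcases Nat.even_or_odd j with he | ho
      · rw [Nat.even_iff] at he
        rw [(show Odd (2*m+1-j) by rw [Nat.odd_iff]; omega).neg_one_pow,
            (show Odd (j+1) by rw [Nat.odd_iff]; omega).neg_one_pow]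
      · rw [Nat.odd_iff] at ho
        rw [(show Even (2*m+1-j) by rw [Nat.even_iff]; omega).neg_one_pow,
            (show Even (j+1) by rw [Nat.even_iff]; omega).neg_one_pow]
    rw [hpar]
    ring
  -- Step B : f equals an explicit polynomial-type sum
  have hfg : ∀ j : ℕ, f j = ∑ i ∈ range (m+1), ∑ t ∈ range (2*(m-i)+1),
      Cc m i t * (j:ℝ)^(2*i + (2*(m-i)+1-t)) := by
    intro j
    have h1 : f j = ∑ k ∈ Icc 1 j, ((j:ℝ)^2 - (k:ℝ)^2)^m := by
      apply sum_congr rfl; intro k _; congr 1; ring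
    rw [h1]
    have h2 : ∀ k ∈ Icc 1 j, ((j:ℝ)^2 - (k:ℝ)^2)^m
        = ∑ i ∈ range (m+1), (-1:ℝ)^(i+m) * ((j:ℝ)^2)^i * ((k:ℝ)^2)^(m-i) * (m.choose i) :=
      fun k _ => sub_pow _ _ m
    rw [sum_congr rfl h2, sum_comm]
    apply sum_congr rfl
    intro i hi
    have hi' : i ≤ m := by simp at hi; omega
    have h3 : ∑ k ∈ Icc 1 j, (-1:ℝ)^(i+m) * ((j:ℝ)^2)^i * ((k:ℝ)^2)^(m-i) * (m.choose i)
        = ((-1:ℝ)^(i+m) * ((j:ℝ)^2)^i * (m.choose i)) * ∑ k ∈ Icc 1 j, (k:ℝ)^(2*(m-i)) := by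
      rw [mul_sum]; apply sum_congr rfl; intro k _
      rw [← pow_mul]; ring
    rw [h3, faul j (2*(m-i)), mul_sum]
    apply sum_congr rfl
    intro t ht
    have ht' : t ≤ 2*(m-i) := by simp at ht; omega
    have hsign : (-1:ℝ)^(i+m) = (-1)^(m-i) := by
      have hh : m - i + 2*i = i + m := by omega
      rw [← hh, pow_add, pow_mul]
      norm_num
    have hexp : ((j:ℝ)^2)^i * (j:ℝ)^(2*(m-i)+1-t) = (j:ℝ)^(2*i + (2*(m-i)+1-t)) := by
      rw [← pow_mul, ← pow_add]
    simp only [Cc]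
    rw [← hexp, hsign]
    push_cast
    ring
  -- Step C : evaluate the forward difference of the polynomial sum
  have hC : (fwdDiff (1:ℕ))^[2*m+1] f 0
      = ((2*m+1)! : ℝ) * ∑ i ∈ range (m+1),
          (m.choose i : ℝ) * (-1:ℝ)^(m-i) / ((2*(m-i)+1 : ℕ):ℝ) := by
    have hgsum : f = ∑ i ∈ range (m+1), ∑ t ∈ range (2*(m-i)+1),
        (fun j : ℕ => Cc m i t * (j:ℝ)^(2*i + (2*(m-i)+1-t))) := by
      funext j
      rw [hfg j, Finset.sum_apply]
      apply sum_congr rfl; intro i _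
      rw [Finset.sum_apply]
    rw [hgsum, fwdDiff_iter_finset_sum, Finset.sum_apply, mul_sum]
    apply sum_congr rfl
    intro i hi
    have hi' : i ≤ m := by simp at hi; omega
    rw [fwdDiff_iter_finset_sum, Finset.sum_apply]
    rw [sum_range_succ' (fun t => (fwdDiff (1:ℕ))^[2*m+1]
        (fun j : ℕ => Cc m i t * (j:ℝ)^(2*i + (2*(m-i)+1-t))) 0) (2*(m-i))]
    have hz : ∀ t ∈ range (2*(m-i)), (fwdDiff (1:ℕ))^[2*m+1]
        (fun j : ℕ => Cc m i (t+1) * (j:ℝ)^(2*i + (2*(m-i)+1-(t+1)))) 0 = 0 := by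
      intro t ht
      have ht' : t < 2*(m-i) := by simpa using ht
      rw [fwd_mul_const', fwd_pow_lt (2*m+1) _ (by omega)]
      simp
    rw [sum_eq_zero hz, zero_add, fwd_mul_const']
    have he : 2*i + (2*(m-i)+1-0) = 2*m+1 := by omega
    rw [he, fwd_pow_self]
    simp only [Cc, bernoulli'_zero, Nat.choose_zero_right]
    push_cast
    ring
  -- Step D : reindex and compare with the Gamma side
  have hrefl : ∑ i ∈ range (m+1), (m.choose i : ℝ) * (-1:ℝ)^(m-i) / ((2*(m-i)+1 : ℕ):ℝ)
      = ∑ i ∈ range (m+1), (-1:ℝ)^i * (m.choose i) / (2*(i:ℝ)+1) := by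
    rw [← sum_range_reflect (fun i => (-1:ℝ)^i * (m.choose i) / (2*(i:ℝ)+1)) (m+1)]
    apply sum_congr rfl
    intro i hi
    have hi' : i ≤ m := by simp at hi; omega
    have h1 : m + 1 - 1 - i = m - i := by omega
    rw [h1, Nat.choose_symm hi']
    push_cast [Nat.sub_add_cancel]
    rw [Nat.cast_sub hi']
    ring
  have hprodpos : (0:ℝ) < ∏ i ∈ range (m+1), ((1:ℝ)/2 + i) :=
    prod_pos (fun i _ => by positivity)
  have hhalf : ∑ i ∈ range (m+1), (-1:ℝ)^i * (m.choose i) / (2*(i:ℝ)+1)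
      = (1/2) * (↑m ! / ∏ i ∈ range (m+1), ((1:ℝ)/2 + i)) := by
    rw [← pf m (1/2) (by norm_num), mul_sum]
    apply sum_congr rfl
    intro i _
    have hden : (0:ℝ) < (1:ℝ)/2 + i := by positivity
    rw [show (2*(i:ℝ)+1) = 2*((1:ℝ)/2 + i) by ring]
    field_simp
  have hG : Real.Gamma (((2*m+1:ℕ):ℝ)/2 + 1)
      = (∏ i ∈ range (m+1), ((1:ℝ)/2 + i)) * Real.sqrt Real.pi := by
    rw [show ((2*m+1:ℕ):ℝ)/2 + 1 = (m:ℝ) + 3/2 by push_cast; ring, gprod]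
  have hsq : (0:ℝ) < Real.sqrt Real.pi := Real.sqrt_pos.mpr Real.pi_pos
  rw [hA, hC, hrefl, hhalf, hG]
  field_simp
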